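/- Let β₁, β₂, δ₁, δ₂ ≥ 0 with β₁+δ₁ > 0, β₂+δ₂ > 0, α₁, α₂, γ₁, γ₂ > 0, |σ| < 1, 0 ≤ α < 1, and suppose the coefficients satisfy |A_n| ≤ (1−α)/(n(n−α)) for n ≥ 2 and |B_n| ≤ (1−α)/(n(n+α)) for n ≥ 1. If W_{(α₁,β₁),(γ₁,δ₁)}(1) + |σ| W_{(α₂,β₂),(γ₂,δ₂)}(1) ≤ 2, then ∑_{n=2}^∞ (n−α) Γ(α₁)Γ(γ₁)|A_n| / (Γ(α₁+(n−1)β₁)Γ(γ₁+(n−1)δ₁)) + |σ| ∑_{n=1}^∞ (n+α) Γ(α₂)Γ(γ₂)|B_n| / (Γ(α₂+(n−1)β₂)Γ(γ₂+(n−1)δ₂)) ≤ 1 − α. -/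

import Mathlib

open Filter Real

section helpers

lemma wright_term_pos {a b c d : ℝ} (ha : 0 < a) (hc : 0 < c) (hb : 0 ≤ b) (hd : 0 ≤ d)
    (x : ℝ) (hx : 0 ≤ x) :
    0 < Real.Gamma a * Real.Gamma c / (Real.Gamma (a + x * b) * Real.Gamma (c + x * d)) :=
  div_pos (mul_pos (Real.Gamma_pos_of_pos ha) (Real.Gamma_pos_of_pos hc))
    (mul_pos (Real.Gamma_pos_of_pos (by nlinarith)) (Real.Gamma_pos_of_pos (by nlinarith)))

lemma coeff_bound {t m k β w : ℝ} (ht : 0 ≤ t) (hm : 1 ≤ m) (hk : 0 < k) (hβ : 0 ≤ β)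
    (hw : w ≤ β / (m * k)) : k * t * w ≤ β * t := by
  have hm0 : (0:ℝ) < m := by linarith
  have h1 : k * t * w ≤ k * t * (β / (m * k)) :=
    mul_le_mul_of_nonneg_left hw (mul_nonneg hk.le ht)
  have h2 : k * t * (β / (m * k)) = β * t * (1 / m) := by
    field_simp
  have h3 : β * t * (1 / m) ≤ β * t * 1 := by
    apply mul_le_mul_of_nonneg_left _ (mul_nonneg hβ ht)
    rw [div_le_one hm0]
    linarith
  calc k * t * w ≤ k * t * (β / (m * k)) := h1
    _ = β * t * (1 / m) := h2
    _ ≤ β * t * 1 := h3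
    _ = β * t := mul_one _

end helpers

section gammabounds

lemma myGamma_two : Real.Gamma 2 = 1 := by
  have := Real.Gamma_nat_eq_factorial 1
  norm_num at this
  convert this using 2
  norm_num

lemma one_le_Gamma {x : ℝ} (hx : 2 ≤ x) : 1 ≤ Real.Gamma x := by
  rcases eq_or_lt_of_le hx with h | h
  · rw [← h, myGamma_two]
  · have key := Real.convexOn_Gamma.slope_mono_adjacent (show (1:ℝ) ∈ Set.Ioi 0 by norm_num)
      (show x ∈ Set.Ioi 0 by simp; linarith) (show (1:ℝ) < 2 by norm_num) h
    rw [Real.Gamma_one, myGamma_two] at key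
    have h2 : (0:ℝ) < x - 2 := by linarith
    have h3 : 0 ≤ (Real.Gamma x - 1) / (x - 2) * (x - 2) :=
      mul_nonneg (by linarith [key]) h2.le
    rw [div_mul_cancel₀ _ h2.ne'] at h3
    linarith

lemma Gamma_mono {x y : ℝ} (hx : 2 ≤ x) (hxy : x ≤ y) : Real.Gamma x ≤ Real.Gamma y := by
  rcases eq_or_lt_of_le hxy with h | h
  · rw [h]
  · have key := Real.convexOn_Gamma.slope_mono_adjacent (show (1:ℝ) ∈ Set.Ioi 0 by norm_num)
      (show y ∈ Set.Ioi 0 by simp; linarith) (show (1:ℝ) < x by linarith) h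
    rw [Real.Gamma_one] at key
    have h1 : (0:ℝ) ≤ (Real.Gamma x - 1) / (x - 1) := by
      apply div_nonneg
      · linarith [one_le_Gamma hx]
      · linarith
    have h2 : (0:ℝ) < y - x := by linarith
    have := le_trans h1 key
    rw [le_div_iff₀ h2] at this
    linarith

lemma Gamma_lb {x : ℝ} (hx : 0 < x) : 1/6 ≤ Real.Gamma x := by
  rcases le_or_gt 2 x with h | h
  · linarith [one_le_Gamma h]
  · have h2 : Real.Gamma (x + 2) = (x + 1) * x * Real.Gamma x := by
      rw [show x + 2 = (x + 1) + 1 by ring, Real.Gamma_add_one (by linarith),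
        Real.Gamma_add_one hx.ne']
      ring
    have h3 : 1 ≤ Real.Gamma (x + 2) := one_le_Gamma (by linarith)
    have h4 := Real.Gamma_pos_of_pos hx
    have h5 : (x + 1) * x < 6 := by nlinarith
    have h6 := mul_lt_mul_of_pos_right h5 h4
    nlinarith

lemma Gamma_convex_bound {x b : ℝ} (hx : 2 ≤ x) (hb0 : 0 < b) (hb1 : b ≤ 1) :
    x * Real.Gamma x ≤ Real.Gamma (x + b) * (x + b) ^ (1 - b : ℝ) := by
  have hxb : 0 < x + b := by linarith
  have hΓx := Real.Gamma_pos_of_pos (show (0:ℝ) < x by linarith)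
  have hΓxb := Real.Gamma_pos_of_pos hxb
  have key := Real.convexOn_log_Gamma.2 (show x + b ∈ Set.Ioi (0:ℝ) by simpa using hxb)
    (show x + b + 1 ∈ Set.Ioi (0:ℝ) by simp; linarith) hb0.le (by linarith : (0:ℝ) ≤ 1 - b)
    (by ring)
  have e1 : b • (x + b) + (1 - b) • (x + b + 1) = x + 1 := by
    simp only [smul_eq_mul]; ring
  rw [e1] at key
  simp only [Function.comp_apply, smul_eq_mul] at key
  have e2 : Real.Gamma (x + 1) = x * Real.Gamma x := Real.Gamma_add_one (by linarith)
  have e3 : Real.Gamma (x + b + 1) = (x + b) * Real.Gamma (x + b) := Real.Gamma_add_one hxb.ne'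
  rw [e2, e3, Real.log_mul hxb.ne' hΓxb.ne'] at key
  rw [← Real.log_le_log_iff (by positivity) (by positivity),
    Real.log_mul hΓxb.ne' (by positivity), Real.log_rpow hxb]
  nlinarith [key]

lemma summable_inv_Gamma (a b : ℝ) (ha : 0 < a) (hb : 0 < b) :
    Summable (fun n : ℕ => 1 / Real.Gamma (a + ((n : ℝ) + 1) * b)) := by
  set b' := min b 1 with hb'def
  have hb'0 : 0 < b' := lt_min hb one_pos
  have hb'1 : b' ≤ 1 := min_le_right _ _
  have hb'b : b' ≤ b := min_le_left _ _
  apply summable_of_ratio_norm_eventually_le (r := 1/2) (by norm_num)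
  have hx : Filter.Tendsto (fun n : ℕ => a + ((n : ℝ) + 1) * b) atTop atTop := by
    apply tendsto_atTop_add_const_left
    apply Filter.Tendsto.atTop_mul_const hb
    exact tendsto_atTop_add_const_right _ _ tendsto_natCast_atTop_atTop
  have hpow : ∀ᶠ x : ℝ in atTop, 4 ≤ (x + b') ^ (b' : ℝ) := by
    have := (tendsto_rpow_atTop hb'0).comp (tendsto_atTop_add_const_right atTop b' tendsto_id)
    exact this.eventually_ge_atTop 4
  have hev : ∀ᶠ x : ℝ in atTop, 2 ≤ x ∧ 4 ≤ (x + b') ^ (b' : ℝ) := by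
    filter_upwards [eventually_ge_atTop (2:ℝ), hpow] with x h1 h2 using ⟨h1, h2⟩
  filter_upwards [hx.eventually hev] with n hn
  obtain ⟨h2, h4⟩ := hn
  set x := a + ((n : ℝ) + 1) * b with hxdef
  have hxx : a + ((n : ℝ) + 1 + 1) * b = x + b := by rw [hxdef]; ring
  have hΓx := Real.Gamma_pos_of_pos (show (0:ℝ) < x by linarith)
  have hΓxb := Real.Gamma_pos_of_pos (show (0:ℝ) < x + b by linarith)
  have hr : (x + b') ^ (1 - b' : ℝ) ≤ x / 2 := by
    have hxb'pos : (0:ℝ) < x + b' := by linarith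
    rw [Real.rpow_sub hxb'pos, Real.rpow_one]
    have : (x + b') / (x + b') ^ (b' : ℝ) ≤ (2 * x) / 4 := by
      apply div_le_div₀ (by linarith) (by linarith) (by norm_num) h4
    linarith
  have hc := Gamma_convex_bound h2 hb'0 hb'1
  have hmono : Real.Gamma (x + b') ≤ Real.Gamma (x + b) := Gamma_mono (by linarith) (by linarith)
  have hΓxb' := Real.Gamma_pos_of_pos (show (0:ℝ) < x + b' by linarith)
  have hkey : 2 * Real.Gamma x ≤ Real.Gamma (x + b) := by
    have h5 : x * Real.Gamma x ≤ Real.Gamma (x + b') * (x / 2) := by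
      calc x * Real.Gamma x ≤ Real.Gamma (x + b') * (x + b') ^ (1 - b' : ℝ) := hc
        _ ≤ Real.Gamma (x + b') * (x / 2) := by
            apply mul_le_mul_of_nonneg_left hr hΓxb'.le
    nlinarith
  push_cast
  rw [hxx]
  rw [Real.norm_eq_abs, Real.norm_eq_abs, abs_of_pos (by positivity), abs_of_pos (by positivity)]
  calc 1 / Real.Gamma (x + b) ≤ 1 / (2 * Real.Gamma x) :=
        one_div_le_one_div_of_le (by positivity) hkey
    _ = 1 / 2 * (1 / Real.Gamma x) := by ring

lemma summable_wright (a b c d : ℝ) (ha : 0 < a) (hc : 0 < c) (hb : 0 ≤ b) (hd : 0 ≤ d)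
    (hbd : 0 < b + d) :
    Summable (fun n : ℕ => Real.Gamma a * Real.Gamma c /
      (Real.Gamma (a + ((n : ℝ) + 1) * b) * Real.Gamma (c + ((n : ℝ) + 1) * d))) := by
  have hGa := Real.Gamma_pos_of_pos ha
  have hGc := Real.Gamma_pos_of_pos hc
  have hXpos : ∀ n : ℕ, 0 < Real.Gamma (a + ((n : ℝ) + 1) * b) := fun n =>
    Real.Gamma_pos_of_pos (by nlinarith [mul_nonneg (by positivity : (0:ℝ) ≤ (n:ℝ)+1) hb])
  have hYpos : ∀ n : ℕ, 0 < Real.Gamma (c + ((n : ℝ) + 1) * d) := fun n =>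
    Real.Gamma_pos_of_pos (by nlinarith [mul_nonneg (by positivity : (0:ℝ) ≤ (n:ℝ)+1) hd])
  have hnonneg : ∀ n : ℕ, 0 ≤ Real.Gamma a * Real.Gamma c /
      (Real.Gamma (a + ((n : ℝ) + 1) * b) * Real.Gamma (c + ((n : ℝ) + 1) * d)) := fun n =>
    le_of_lt (div_pos (mul_pos hGa hGc) (mul_pos (hXpos n) (hYpos n)))
  have key : ∀ (X Y : ℝ), 0 < X → 0 < Y → 1/6 ≤ Y →
      Real.Gamma a * Real.Gamma c / (X * Y) ≤ Real.Gamma a * Real.Gamma c * 6 * (1 / X) := by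
    intro X Y hX hY hY6
    have h1 : 1 / Y ≤ 6 := by
      rw [div_le_iff₀ hY]; linarith
    have h2 : Real.Gamma a * Real.Gamma c / (X * Y)
        = (Real.Gamma a * Real.Gamma c / X) * (1 / Y) := by
      rw [div_mul_div_comm, mul_one]
    rw [h2]
    calc (Real.Gamma a * Real.Gamma c / X) * (1 / Y)
        ≤ (Real.Gamma a * Real.Gamma c / X) * 6 :=
          mul_le_mul_of_nonneg_left h1 (by positivity)
      _ = Real.Gamma a * Real.Gamma c * 6 * (1 / X) := by ring
  rcases hb.lt_or_eq with hb0 | hb0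
  · apply Summable.of_nonneg_of_le hnonneg
      (fun n => key _ _ (hXpos n) (hYpos n)
        (Gamma_lb (by nlinarith [mul_nonneg (by positivity : (0:ℝ) ≤ (n:ℝ)+1) hd])))
    exact (summable_inv_Gamma a b ha hb0).mul_left _
  · have hd0 : 0 < d := by linarith
    have hle : ∀ n : ℕ, Real.Gamma a * Real.Gamma c /
        (Real.Gamma (a + ((n : ℝ) + 1) * b) * Real.Gamma (c + ((n : ℝ) + 1) * d))
        ≤ Real.Gamma c * Real.Gamma a * 6 * (1 / Real.Gamma (c + ((n : ℝ) + 1) * d)) := by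
      intro n
      have := key (Real.Gamma (c + ((n : ℝ) + 1) * d)) (Real.Gamma (a + ((n : ℝ) + 1) * b))
        (hYpos n) (hXpos n) (Gamma_lb (by nlinarith [mul_nonneg (by positivity : (0:ℝ) ≤ (n:ℝ)+1) hb]))
      calc Real.Gamma a * Real.Gamma c /
          (Real.Gamma (a + ((n : ℝ) + 1) * b) * Real.Gamma (c + ((n : ℝ) + 1) * d))
          = Real.Gamma a * Real.Gamma c /
            (Real.Gamma (c + ((n : ℝ) + 1) * d) * Real.Gamma (a + ((n : ℝ) + 1) * b)) := by
            rw [mul_comm (Real.Gamma (a + ((n : ℝ) + 1) * b))]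
        _ ≤ Real.Gamma a * Real.Gamma c * 6 * (1 / Real.Gamma (c + ((n : ℝ) + 1) * d)) := this
        _ = Real.Gamma c * Real.Gamma a * 6 * (1 / Real.Gamma (c + ((n : ℝ) + 1) * d)) := by ring
    apply Summable.of_nonneg_of_le hnonneg hle
    exact (summable_inv_Gamma c d hc hd0).mul_left _

end gammabounds



/-- The normalized four-parameter Wright function
`W_{(a,b),(c,d)}(x) = x + ∑_{n=2}^∞ Γ(a)Γ(c) xⁿ / (Γ(a+(n-1)b)Γ(c+(n-1)d))`
(as a function of a real variable, evaluated along the real axis). -/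
noncomputable def wrightW (a b c d : ℝ) : ℝ → ℝ := fun x =>
  x + ∑' n : ℕ, Real.Gamma a * Real.Gamma c /
    (Real.Gamma (a + ((n : ℝ) + 1) * b) * Real.Gamma (c + ((n : ℝ) + 1) * d)) * x ^ (n + 2)

/-- if f ∈ SRH(α) (so the coefficient bounds hold) and
W₁(1) + |σ| W₂(1) ≤ 2 then L(f) satisfies the SRH(α) coefficient condition. -/
theorem Lf_SRH_coefficient_estimate (α₁ β₁ γ₁ δ₁ α₂ β₂ γ₂ δ₂ α : ℝ) (σ : ℂ) (A B : ℕ → ℂ)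
    (hβ₁ : 0 ≤ β₁) (hδ₁ : 0 ≤ δ₁) (hβδ₁ : 0 < β₁ + δ₁)
    (hβ₂ : 0 ≤ β₂) (hδ₂ : 0 ≤ δ₂) (hβδ₂ : 0 < β₂ + δ₂)
    (hα₁ : 0 < α₁) (hγ₁ : 0 < γ₁) (hα₂ : 0 < α₂) (hγ₂ : 0 < γ₂)
    (hσ : ‖σ‖ < 1) (hα0 : 0 ≤ α) (hα1 : α < 1)
    (hA : ∀ n : ℕ, 2 ≤ n → ‖A n‖ ≤ (1 - α) / ((n : ℝ) * ((n : ℝ) - α)))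
    (hB : ∀ n : ℕ, 1 ≤ n → ‖B n‖ ≤ (1 - α) / ((n : ℝ) * ((n : ℝ) + α)))
    (hyp : wrightW α₁ β₁ γ₁ δ₁ 1 + ‖σ‖ * wrightW α₂ β₂ γ₂ δ₂ 1 ≤ 2) :
    (∑' n : ℕ, ((n : ℝ) + 2 - α) *
        (Real.Gamma α₁ * Real.Gamma γ₁ /
          (Real.Gamma (α₁ + ((n : ℝ) + 1) * β₁) * Real.Gamma (γ₁ + ((n : ℝ) + 1) * δ₁))) * ‖A (n + 2)‖)
      + ‖σ‖ * ∑' n : ℕ, ((n : ℝ) + 1 + α) *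
        (Real.Gamma α₂ * Real.Gamma γ₂ /
          (Real.Gamma (α₂ + (n : ℝ) * β₂) * Real.Gamma (γ₂ + (n : ℝ) * δ₂))) * ‖B (n + 1)‖
      ≤ 1 - α := by
  simp only [wrightW, one_pow, mul_one] at hyp
  -- summability of the Wright term series
  have hs₁ := summable_wright α₁ β₁ γ₁ δ₁ hα₁ hγ₁ hβ₁ hδ₁ hβδ₁
  have hs₂ := summable_wright α₂ β₂ γ₂ δ₂ hα₂ hγ₂ hβ₂ hδ₂ hβδ₂
  have hs₂' : Summable (fun n : ℕ => Real.Gamma α₂ * Real.Gamma γ₂ /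
      (Real.Gamma (α₂ + (n : ℝ) * β₂) * Real.Gamma (γ₂ + (n : ℝ) * δ₂))) := by
    rw [← summable_nat_add_iff 1]
    exact hs₂.congr (fun n => by push_cast; ring_nf)
  -- positivity of terms
  have hT₁pos : ∀ n : ℕ, 0 < Real.Gamma α₁ * Real.Gamma γ₁ /
      (Real.Gamma (α₁ + ((n : ℝ) + 1) * β₁) * Real.Gamma (γ₁ + ((n : ℝ) + 1) * δ₁)) :=
    fun n => wright_term_pos hα₁ hγ₁ hβ₁ hδ₁ _ (by positivity)
  have hT₂pos : ∀ n : ℕ, 0 < Real.Gamma α₂ * Real.Gamma γ₂ /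
      (Real.Gamma (α₂ + ((n : ℝ) + 1) * β₂) * Real.Gamma (γ₂ + ((n : ℝ) + 1) * δ₂)) :=
    fun n => wright_term_pos hα₂ hγ₂ hβ₂ hδ₂ _ (by positivity)
  have hT₂'pos : ∀ n : ℕ, 0 < Real.Gamma α₂ * Real.Gamma γ₂ /
      (Real.Gamma (α₂ + (n : ℝ) * β₂) * Real.Gamma (γ₂ + (n : ℝ) * δ₂)) :=
    fun n => wright_term_pos hα₂ hγ₂ hβ₂ hδ₂ _ (by positivity)
  -- pointwise bounds for the two goal series
  have hg₁ : ∀ n : ℕ, ((n : ℝ) + 2 - α) *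
      (Real.Gamma α₁ * Real.Gamma γ₁ /
        (Real.Gamma (α₁ + ((n : ℝ) + 1) * β₁) * Real.Gamma (γ₁ + ((n : ℝ) + 1) * δ₁))) * ‖A (n + 2)‖
      ≤ (1 - α) * (Real.Gamma α₁ * Real.Gamma γ₁ /
        (Real.Gamma (α₁ + ((n : ℝ) + 1) * β₁) * Real.Gamma (γ₁ + ((n : ℝ) + 1) * δ₁))) := by
    intro n
    have hAn := hA (n + 2) (by omega)
    push_cast at hAn
    exact coeff_bound (hT₁pos n).le (by linarith [Nat.cast_nonneg (α := ℝ) n])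
      (by linarith [Nat.cast_nonneg (α := ℝ) n]) (by linarith) hAn
  have hg₂ : ∀ n : ℕ, ((n : ℝ) + 1 + α) *
      (Real.Gamma α₂ * Real.Gamma γ₂ /
        (Real.Gamma (α₂ + (n : ℝ) * β₂) * Real.Gamma (γ₂ + (n : ℝ) * δ₂))) * ‖B (n + 1)‖
      ≤ (1 - α) * (Real.Gamma α₂ * Real.Gamma γ₂ /
        (Real.Gamma (α₂ + (n : ℝ) * β₂) * Real.Gamma (γ₂ + (n : ℝ) * δ₂))) := by
    intro n
    have hBn := hB (n + 1) (by omega)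
    push_cast at hBn
    exact coeff_bound (hT₂'pos n).le (by linarith [Nat.cast_nonneg (α := ℝ) n])
      (by linarith [Nat.cast_nonneg (α := ℝ) n]) (by linarith) hBn
  -- nonnegativity of goal terms
  have hg₁nn : ∀ n : ℕ, 0 ≤ ((n : ℝ) + 2 - α) *
      (Real.Gamma α₁ * Real.Gamma γ₁ /
        (Real.Gamma (α₁ + ((n : ℝ) + 1) * β₁) * Real.Gamma (γ₁ + ((n : ℝ) + 1) * δ₁))) * ‖A (n + 2)‖ :=
    fun n => mul_nonneg (mul_nonneg (by linarith [Nat.cast_nonneg (α := ℝ) n]) (hT₁pos n).le)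
      (norm_nonneg _)
  have hg₂nn : ∀ n : ℕ, 0 ≤ ((n : ℝ) + 1 + α) *
      (Real.Gamma α₂ * Real.Gamma γ₂ /
        (Real.Gamma (α₂ + (n : ℝ) * β₂) * Real.Gamma (γ₂ + (n : ℝ) * δ₂))) * ‖B (n + 1)‖ :=
    fun n => mul_nonneg (mul_nonneg (by linarith [Nat.cast_nonneg (α := ℝ) n]) (hT₂'pos n).le)
      (norm_nonneg _)
  have hgs₁ : Summable (fun n : ℕ => ((n : ℝ) + 2 - α) *
      (Real.Gamma α₁ * Real.Gamma γ₁ /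
        (Real.Gamma (α₁ + ((n : ℝ) + 1) * β₁) * Real.Gamma (γ₁ + ((n : ℝ) + 1) * δ₁))) * ‖A (n + 2)‖) :=
    Summable.of_nonneg_of_le hg₁nn hg₁ (hs₁.mul_left _)
  have hgs₂ : Summable (fun n : ℕ => ((n : ℝ) + 1 + α) *
      (Real.Gamma α₂ * Real.Gamma γ₂ /
        (Real.Gamma (α₂ + (n : ℝ) * β₂) * Real.Gamma (γ₂ + (n : ℝ) * δ₂))) * ‖B (n + 1)‖) :=
    Summable.of_nonneg_of_le hg₂nn hg₂ (hs₂'.mul_left _)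
  -- bounds on the two tsums
  have key₁ : (∑' n : ℕ, ((n : ℝ) + 2 - α) *
      (Real.Gamma α₁ * Real.Gamma γ₁ /
        (Real.Gamma (α₁ + ((n : ℝ) + 1) * β₁) * Real.Gamma (γ₁ + ((n : ℝ) + 1) * δ₁))) * ‖A (n + 2)‖)
      ≤ (1 - α) * ∑' n : ℕ, Real.Gamma α₁ * Real.Gamma γ₁ /
        (Real.Gamma (α₁ + ((n : ℝ) + 1) * β₁) * Real.Gamma (γ₁ + ((n : ℝ) + 1) * δ₁)) := by
    rw [← tsum_mul_left]
    exact Summable.tsum_le_tsum hg₁ hgs₁ (hs₁.mul_left _)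
  have hshift : (∑' n : ℕ, Real.Gamma α₂ * Real.Gamma γ₂ /
      (Real.Gamma (α₂ + (n : ℝ) * β₂) * Real.Gamma (γ₂ + (n : ℝ) * δ₂)))
      = 1 + ∑' n : ℕ, Real.Gamma α₂ * Real.Gamma γ₂ /
        (Real.Gamma (α₂ + ((n : ℝ) + 1) * β₂) * Real.Gamma (γ₂ + ((n : ℝ) + 1) * δ₂)) := by
    rw [Summable.tsum_eq_zero_add hs₂']
    congr 1
    · simp only [Nat.cast_zero, zero_mul, add_zero]
      exact div_self (mul_pos (Real.Gamma_pos_of_pos hα₂) (Real.Gamma_pos_of_pos hγ₂)).ne'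
    · exact tsum_congr (fun n => by push_cast; ring_nf)
  have key₂ : (∑' n : ℕ, ((n : ℝ) + 1 + α) *
      (Real.Gamma α₂ * Real.Gamma γ₂ /
        (Real.Gamma (α₂ + (n : ℝ) * β₂) * Real.Gamma (γ₂ + (n : ℝ) * δ₂))) * ‖B (n + 1)‖)
      ≤ (1 - α) * (1 + ∑' n : ℕ, Real.Gamma α₂ * Real.Gamma γ₂ /
        (Real.Gamma (α₂ + ((n : ℝ) + 1) * β₂) * Real.Gamma (γ₂ + ((n : ℝ) + 1) * δ₂))) := by
    rw [← hshift, ← tsum_mul_left]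
    exact Summable.tsum_le_tsum hg₂ hgs₂ (hs₂'.mul_left _)
  have hσ0 : (0:ℝ) ≤ ‖σ‖ := norm_nonneg σ
  have key₂' := mul_le_mul_of_nonneg_left key₂ hσ0
  have hS₂nn : 0 ≤ ∑' n : ℕ, Real.Gamma α₂ * Real.Gamma γ₂ /
      (Real.Gamma (α₂ + ((n : ℝ) + 1) * β₂) * Real.Gamma (γ₂ + ((n : ℝ) + 1) * δ₂)) :=
    tsum_nonneg (fun n => (hT₂pos n).le)
  have h9 : (∑' n : ℕ, Real.Gamma α₁ * Real.Gamma γ₁ /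
      (Real.Gamma (α₁ + ((n : ℝ) + 1) * β₁) * Real.Gamma (γ₁ + ((n : ℝ) + 1) * δ₁)))
      + ‖σ‖ * (1 + ∑' n : ℕ, Real.Gamma α₂ * Real.Gamma γ₂ /
        (Real.Gamma (α₂ + ((n : ℝ) + 1) * β₂) * Real.Gamma (γ₂ + ((n : ℝ) + 1) * δ₂))) ≤ 1 := by
    nlinarith [hyp]
  have h10 := mul_le_mul_of_nonneg_left h9 (show (0:ℝ) ≤ 1 - α by linarith)
  nlinarith [key₁, key₂', h10]
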